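/- Let A = A⁰ ⊕ A¹ be a finite-dimensional associative ℤ₂-graded algebra over a field F of characteristic zero, and write A⁰ = S ⊕ J where S is a semisimple subalgebra and J = J(A⁰) is the Jacobson radical of A⁰. Then for any m ∈ ℕ, G_m(A) = S + (J + G_m*(A)), and N := J ⊗ 1 + G_m*(A) equals the Jacobson radical of G_m(A). -/

import Mathlib

open scoped TensorProduct

noncomputable section

variable (F : Type*) [Field F]

/-- Grassmann (exterior) algebra on generators indexed by `ι`. -/
abbrev Grass (ι : Type*) := ExteriorAlgebra F (ι →₀ F)

/-- The parity (ℤ₂) grading of the Grassmann algebra. -/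
def grassPart (ι : Type*) (i : ZMod 2) : Submodule F (Grass F ι) :=
  CliffordAlgebra.evenOdd (0 : QuadraticForm F (ι →₀ F)) i

/-- The augmentation ideal of the Grassmann algebra: elements with zero constant term. -/
def grassStar (ι : Type*) : Submodule F (Grass F ι) :=
  LinearMap.ker (ExteriorAlgebra.algebraMapInv (M := ι →₀ F)).toLinearMap

/-- The image of `p ⊗ q` inside `A ⊗[F] B`. -/
def tensSub {A B : Type*} [Ring A] [Ring B] [Algebra F A] [Algebra F B]
    (p : Submodule F A) (q : Submodule F B) : Submodule F (A ⊗[F] B) :=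
  LinearMap.range (TensorProduct.map p.subtype q.subtype)

/-- The Grassmann envelope `A⁰ ⊗ G⁰ ⊕ A¹ ⊗ G¹` of a ℤ₂-graded algebra. -/
def grassEnv (A : Type*) [Ring A] [Algebra F A] (𝒜 : ZMod 2 → Submodule F A)
    (ι : Type*) : Submodule F (A ⊗[F] Grass F ι) :=
  tensSub F (𝒜 0) (grassPart F ι 0) ⊔ tensSub F (𝒜 1) (grassPart F ι 1)

/-- The Grassmann envelope without constant terms `(G*)⁰ ⊗ A⁰ ⊕ (G*)¹ ⊗ A¹`. -/
def grassEnvStar (A : Type*) [Ring A] [Algebra F A] (𝒜 : ZMod 2 → Submodule F A)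
    (ι : Type*) : Submodule F (A ⊗[F] Grass F ι) :=
  tensSub F (𝒜 0) (grassStar F ι ⊓ grassPart F ι 0) ⊔
    tensSub F (𝒜 1) (grassStar F ι ⊓ grassPart F ι 1)

namespace GrassAux

variable {F}
variable {A B : Type*} [Ring A] [Ring B] [Algebra F A] [Algebra F B]

lemma tmul_mem_tensSub {p : Submodule F A} {q : Submodule F B} {a : A} {b : B}
    (ha : a ∈ p) (hb : b ∈ q) : a ⊗ₜ[F] b ∈ tensSub F p q :=
  ⟨⟨a, ha⟩ ⊗ₜ ⟨b, hb⟩, by simp [tensSub]⟩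

lemma tensSub_le {p : Submodule F A} {q : Submodule F B} {W : Submodule F (A ⊗[F] B)}
    (h : ∀ a ∈ p, ∀ b ∈ q, a ⊗ₜ[F] b ∈ W) : tensSub F p q ≤ W := by
  rw [tensSub, TensorProduct.range_map_eq_span_tmul, Submodule.span_le]
  rintro _ ⟨a, b, rfl⟩
  exact h a a.2 b b.2

lemma tensSub_mono {p p' : Submodule F A} {q q' : Submodule F B} (hp : p ≤ p') (hq : q ≤ q') :
    tensSub F p q ≤ tensSub F p' q' :=
  tensSub_le fun _ ha _ hb => tmul_mem_tensSub (hp ha) (hq hb)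

lemma tensSub_mul_le {p p' : Submodule F A} {q q' : Submodule F B} :
    tensSub F p q * tensSub F p' q' ≤ tensSub F (p * p') (q * q') := by
  rw [tensSub, TensorProduct.range_map_eq_span_tmul, tensSub,
    TensorProduct.range_map_eq_span_tmul, Submodule.span_mul_span, Submodule.span_le]
  rintro _ ⟨_, ⟨a, b, rfl⟩, _, ⟨c, d, rfl⟩, rfl⟩
  show (p.subtype a ⊗ₜ[F] q.subtype b) * (p'.subtype c ⊗ₜ[F] q'.subtype d) ∈ _
  rw [Algebra.TensorProduct.tmul_mul_tmul]
  exact tmul_mem_tensSub (Submodule.mul_mem_mul a.2 c.2) (Submodule.mul_mem_mul b.2 d.2)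

lemma tensSub_bot (p : Submodule F A) : tensSub F p (⊥ : Submodule F B) = ⊥ := by
  rw [eq_bot_iff]
  refine tensSub_le fun a _ b hb => ?_
  obtain rfl : b = 0 := hb
  simp

lemma tensSub_top : tensSub F (⊤ : Submodule F A) (⊤ : Submodule F B) = ⊤ := by
  rw [eq_top_iff]
  intro x _
  induction x using TensorProduct.induction_on with
  | zero => exact Submodule.zero_mem _
  | tmul a b => exact tmul_mem_tensSub trivial trivial
  | add x y hx hy => exact Submodule.add_mem _ (hx trivial) (hy trivial)

lemma pow_mono {X Y : Submodule F A} (h : X ≤ Y) : ∀ k, X ^ k ≤ Y ^ k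
  | 0 => le_rfl
  | (k+1) => by
      rw [pow_succ, pow_succ]
      exact mul_le_mul' (pow_mono h k) h

section Grassmann

variable {ι : Type*}

lemma mem_grassStar_iff {x : Grass F ι} :
    x ∈ grassStar F ι ↔ ExteriorAlgebra.algebraMapInv (M := ι →₀ F) x = 0 := Iff.rfl

lemma mul_mem_grassStar {x y : Grass F ι} (h : y ∈ grassStar F ι) :
    x * y ∈ grassStar F ι := by
  rw [mem_grassStar_iff] at h ⊢
  rw [map_mul, h, mul_zero]

lemma mem_grassStar_mul {x y : Grass F ι} (h : x ∈ grassStar F ι) :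
    x * y ∈ grassStar F ι := by
  rw [mem_grassStar_iff] at h ⊢
  rw [map_mul, h, zero_mul]

lemma range_ι_le_grassStar :
    LinearMap.range (ExteriorAlgebra.ι F (M := ι →₀ F)) ≤ grassStar F ι := by
  rintro _ ⟨v, rfl⟩
  rw [mem_grassStar_iff]
  simp [ExteriorAlgebra.algebraMapInv]

lemma pow_range_ι_le_grassStar (n : ℕ) :
    LinearMap.range (ExteriorAlgebra.ι F (M := ι →₀ F)) ^ (n+1) ≤ grassStar F ι := by
  rw [pow_succ]
  exact Submodule.mul_le.2 fun x _ y hy => mul_mem_grassStar (range_ι_le_grassStar hy)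

lemma grassPart_one_le_grassStar : grassPart F ι 1 ≤ grassStar F ι := by
  rw [grassPart, CliffordAlgebra.evenOdd]
  refine iSup_le fun j => ?_
  obtain ⟨n, hn⟩ := j
  cases n with
  | zero => simp at hn
  | succ k => exact pow_range_ι_le_grassStar k

lemma one_mem_grassPart_zero : (1 : Grass F ι) ∈ grassPart F ι 0 :=
  Submodule.one_le.mp (CliffordAlgebra.one_le_evenOdd_zero _)

lemma grassPart_mul_le (i j : ZMod 2) :
    grassPart F ι i * grassPart F ι j ≤ grassPart F ι (i + j) :=
  CliffordAlgebra.evenOdd_mul_le _ i j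

lemma grassStar_le_iSup :
    grassStar F ι ≤ ⨆ n : ℕ, LinearMap.range (ExteriorAlgebra.ι F (M := ι →₀ F)) ^ (n+1) := by
  intro x hx
  have htop : x ∈ ⨆ n : ℕ, LinearMap.range (ExteriorAlgebra.ι F (M := ι →₀ F)) ^ n := by
    rw [CliffordAlgebra.iSup_ι_range_eq_top]; trivial
  have hsplit : (⨆ n : ℕ, LinearMap.range (ExteriorAlgebra.ι F (M := ι →₀ F)) ^ n) ≤
      LinearMap.range (ExteriorAlgebra.ι F (M := ι →₀ F)) ^ 0 ⊔
        ⨆ n : ℕ, LinearMap.range (ExteriorAlgebra.ι F (M := ι →₀ F)) ^ (n+1) := by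
    refine iSup_le fun n => ?_
    cases n with
    | zero => exact le_sup_left
    | succ k =>
        exact le_sup_of_le_right
          (le_iSup (fun n => LinearMap.range (ExteriorAlgebra.ι F (M := ι →₀ F)) ^ (n+1)) k)
  have hx2 := hsplit htop
  rw [pow_zero] at hx2
  rcases Submodule.mem_sup.1 hx2 with ⟨u, hu, y, hy, rfl⟩
  rw [Submodule.one_eq_span, Submodule.mem_span_singleton] at hu
  obtain ⟨c, rfl⟩ := hu
  have hys : y ∈ grassStar F ι := (iSup_le fun n => pow_range_ι_le_grassStar n) hy
  rw [mem_grassStar_iff] at hx hys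
  rw [map_add, map_smul, map_one, hys, add_zero, smul_eq_mul, mul_one] at hx
  rw [hx, zero_smul, zero_add]
  exact hy

lemma pow_range_ι_eq_bot (m : ℕ) :
    LinearMap.range (ExteriorAlgebra.ι F (M := Fin m →₀ F)) ^ (m+1) = ⊥ := by
  have : (⋀[F]^(m+1) (Fin m →₀ F) : Submodule F (Grass F (Fin m))) = ⊥ := by
    rw [← ExteriorAlgebra.ιMulti_span_fixedDegree, Submodule.span_eq_bot]
    rintro _ ⟨v, rfl⟩
    refine AlternatingMap.map_linearDependent _ v fun hli => ?_
    have hcard := hli.fintype_card_le_finrank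
    rw [Fintype.card_fin, Module.finrank_finsupp_self, Fintype.card_fin] at hcard
    omega
  exact this

lemma grassStar_pow (m : ℕ) : grassStar F (Fin m) ^ (m+1) = ⊥ := by
  have hY : ∀ j k : ℕ,
      (⨆ n : ℕ, LinearMap.range (ExteriorAlgebra.ι F (M := Fin m →₀ F)) ^ (n+j)) *
        (⨆ n : ℕ, LinearMap.range (ExteriorAlgebra.ι F (M := Fin m →₀ F)) ^ (n+k)) ≤
      ⨆ n : ℕ, LinearMap.range (ExteriorAlgebra.ι F (M := Fin m →₀ F)) ^ (n+(j+k)) := by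
    intro j k
    rw [Submodule.iSup_mul]
    refine iSup_le fun a => ?_
    rw [Submodule.mul_iSup]
    refine iSup_le fun b => ?_
    rw [← pow_add]
    have he : a + j + (b + k) = (a + b) + (j + k) := by ring
    rw [he]
    exact le_iSup
      (fun n => LinearMap.range (ExteriorAlgebra.ι F (M := Fin m →₀ F)) ^ (n+(j+k))) (a+b)
  have hpow : ∀ k : ℕ, grassStar F (Fin m) ^ (k+1) ≤
      ⨆ n : ℕ, LinearMap.range (ExteriorAlgebra.ι F (M := Fin m →₀ F)) ^ (n+(k+1)) := by
    intro k
    induction k with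
    | zero => simpa using grassStar_le_iSup (F := F) (ι := Fin m)
    | succ l ih =>
        rw [pow_succ]
        calc grassStar F (Fin m) ^ (l+1) * grassStar F (Fin m)
            ≤ (⨆ n : ℕ, LinearMap.range (ExteriorAlgebra.ι F (M := Fin m →₀ F)) ^ (n+(l+1))) *
              (⨆ n : ℕ, LinearMap.range (ExteriorAlgebra.ι F (M := Fin m →₀ F)) ^ (n+1)) :=
              mul_le_mul' ih grassStar_le_iSup
          _ ≤ ⨆ n : ℕ, LinearMap.range (ExteriorAlgebra.ι F (M := Fin m →₀ F)) ^ (n+(l+1+1)) :=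
              hY _ _
  rw [eq_bot_iff]
  refine le_trans (hpow m) (iSup_le fun n => ?_)
  have he : n + (m+1) = (m+1) + n := by ring
  rw [he, pow_add, pow_range_ι_eq_bot]
  exact (Submodule.bot_mul _).le

end Grassmann

section Envelope

variable (F) in
/-- The projection `A ⊗ G → A` induced by the augmentation of the Grassmann algebra. -/
def envPi (A : Type*) [Ring A] [Algebra F A] (ι : Type*) :
    A ⊗[F] Grass F ι →ₐ[F] A :=
  Algebra.TensorProduct.lift (AlgHom.id F A)
    ((Algebra.ofId F A).comp (ExteriorAlgebra.algebraMapInv (M := ι →₀ F)))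
    (fun _ y => (Algebra.commutes _ _).symm)

variable {A : Type*} [Ring A] [Algebra F A] {ι : Type*}

lemma envPi_tmul (a : A) (g : Grass F ι) :
    envPi F A ι (a ⊗ₜ g) = ExteriorAlgebra.algebraMapInv (M := ι →₀ F) g • a := by
  show a * algebraMap F A (ExteriorAlgebra.algebraMapInv (M := ι →₀ F) g) = _
  rw [Algebra.smul_def, Algebra.commutes]

lemma envPi_includeLeft (a : A) : envPi F A ι (a ⊗ₜ (1 : Grass F ι)) = a := by
  rw [envPi_tmul, map_one, one_smul]

variable {𝒜 : ZMod 2 → Submodule F A} [GradedAlgebra 𝒜]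

lemma grassEnv_decomp {x : A ⊗[F] Grass F ι} (hx : x ∈ grassEnv F A 𝒜 ι) :
    envPi F A ι x ∈ 𝒜 0 ∧
      x - (Algebra.TensorProduct.includeLeft (S := F)).toLinearMap (envPi F A ι x)
        ∈ grassEnvStar F A 𝒜 ι := by
  let W : Submodule F (A ⊗[F] Grass F ι) :=
    Submodule.comap (envPi F A ι).toLinearMap (𝒜 0) ⊓
      Submodule.comap (LinearMap.id - (Algebra.TensorProduct.includeLeft (S := F)).toLinearMap ∘ₗ
        (envPi F A ι).toLinearMap) (grassEnvStar F A 𝒜 ι)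
  have hW : grassEnv F A 𝒜 ι ≤ W := by
    rw [grassEnv]
    refine sup_le (tensSub_le fun a ha g hg => ?_) (tensSub_le fun a ha g hg => ?_)
    · constructor
      · show envPi F A ι (a ⊗ₜ g) ∈ 𝒜 0
        rw [envPi_tmul]
        exact Submodule.smul_mem _ _ ha
      · simp only [SetLike.mem_coe, Submodule.mem_comap, LinearMap.sub_apply, LinearMap.id_apply, LinearMap.comp_apply]
        show a ⊗ₜ[F] g - (Algebra.TensorProduct.includeLeft (S := F)).toLinearMap
            (envPi F A ι (a ⊗ₜ g)) ∈ grassEnvStar F A 𝒜 ι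
        rw [envPi_tmul, map_smul]
        have h1 : ((ExteriorAlgebra.algebraMapInv (M := ι →₀ F)) g) •
            ((Algebra.TensorProduct.includeLeft (S := F)).toLinearMap a)
            = a ⊗ₜ[F] (((ExteriorAlgebra.algebraMapInv (M := ι →₀ F)) g) • (1 : Grass F ι)) := by
          show ((ExteriorAlgebra.algebraMapInv (M := ι →₀ F)) g) • (a ⊗ₜ[F] (1 : Grass F ι)) = _
          rw [TensorProduct.smul_tmul', TensorProduct.smul_tmul]
        rw [h1, ← TensorProduct.tmul_sub]
        refine Submodule.mem_sup_left (tmul_mem_tensSub ha (Submodule.mem_inf.2 ⟨?_, ?_⟩))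
        · rw [mem_grassStar_iff, map_sub, map_smul, map_one, smul_eq_mul, mul_one, sub_self]
        · exact Submodule.sub_mem _ hg (Submodule.smul_mem _ _ one_mem_grassPart_zero)
    · have hg0 : (ExteriorAlgebra.algebraMapInv (M := ι →₀ F)) g = 0 :=
        mem_grassStar_iff.1 (grassPart_one_le_grassStar hg)
      have hπ0 : envPi F A ι (a ⊗ₜ g) = 0 := by rw [envPi_tmul, hg0, zero_smul]
      constructor
      · show envPi F A ι (a ⊗ₜ g) ∈ 𝒜 0
        rw [hπ0]; exact Submodule.zero_mem _
      · simp only [SetLike.mem_coe, Submodule.mem_comap, LinearMap.sub_apply, LinearMap.id_apply, LinearMap.comp_apply]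
        show a ⊗ₜ[F] g - (Algebra.TensorProduct.includeLeft (S := F)).toLinearMap
            (envPi F A ι (a ⊗ₜ g)) ∈ grassEnvStar F A 𝒜 ι
        rw [hπ0, map_zero, sub_zero]
        exact Submodule.mem_sup_right
          (tmul_mem_tensSub ha (Submodule.mem_inf.2 ⟨grassPart_one_le_grassStar hg, hg⟩))
  have hmem := hW hx
  rw [Submodule.mem_inf, Submodule.mem_comap, Submodule.mem_comap, LinearMap.sub_apply,
    LinearMap.id_apply, LinearMap.comp_apply] at hmem
  exact hmem

end Envelope

end GrassAux

set_option maxHeartbeats 2000000 in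
open GrassAux in
/-- Wedderburn–Malcev decomposition of the Grassmann envelope `G_m(A)`:
if `A⁰ = S ⊕ J` with `S` a semisimple subalgebra and `J = J(A⁰)` the Jacobson radical
(= largest nilpotent ideal) of `A⁰`, then `G_m(A) = S + (J + G_m*(A))` and
`N = J ⊗ 1 + G_m*(A)` is the Jacobson radical (= largest nilpotent ideal) of `G_m(A)`. -/
theorem grassEnv_wedderburnMalcev
    (A : Type*) [Ring A] [Algebra F A] [FiniteDimensional F A] [CharZero F]
    (𝒜 : ZMod 2 → Submodule F A) [GradedAlgebra 𝒜]
    (S : Subalgebra F A) (hS : IsSemisimpleRing S) (J : Submodule F A)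
    -- `A⁰ = S ⊕ J` :
    (hSA : S.toSubmodule ≤ 𝒜 0) (hJA : J ≤ 𝒜 0)
    (hSJ : S.toSubmodule ⊔ J = 𝒜 0) (hSJ' : S.toSubmodule ⊓ J = ⊥)
    -- `J` is the Jacobson radical of `A⁰`, i.e. its largest nilpotent ideal:
    (hJl : 𝒜 0 * J ≤ J) (hJr : J * 𝒜 0 ≤ J) (hJnil : ∃ r : ℕ, J ^ r = ⊥)
    (hJmax : ∀ I : Submodule F A, I ≤ 𝒜 0 → 𝒜 0 * I ≤ I → I * 𝒜 0 ≤ I →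
      (∃ r : ℕ, I ^ r = ⊥) → I ≤ J)
    (m : ℕ) :
    -- notation: `S ⊗ 1`, `J ⊗ 1` and `N = J ⊗ 1 + G_m*(A)` inside `A ⊗ G_m`
    letI ι₁ : A →ₗ[F] A ⊗[F] Grass F (Fin m) :=
      (Algebra.TensorProduct.includeLeft (S := F)).toLinearMap
    letI N : Submodule F (A ⊗[F] Grass F (Fin m)) :=
      Submodule.map ι₁ J ⊔ grassEnvStar F A 𝒜 (Fin m)
    -- `G_m(A) = S + (J + G_m*(A))` :
    grassEnv F A 𝒜 (Fin m) = Submodule.map ι₁ S.toSubmodule ⊔ N ∧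
    -- `N` is an ideal of `G_m(A)` ...
    N ≤ grassEnv F A 𝒜 (Fin m) ∧
    grassEnv F A 𝒜 (Fin m) * N ≤ N ∧ N * grassEnv F A 𝒜 (Fin m) ≤ N ∧
    -- ... which is nilpotent ...
    (∃ r : ℕ, N ^ r = ⊥) ∧
    -- ... and is the largest such, i.e. the Jacobson radical of `G_m(A)`:
    (∀ I : Submodule F (A ⊗[F] Grass F (Fin m)), I ≤ grassEnv F A 𝒜 (Fin m) →
      grassEnv F A 𝒜 (Fin m) * I ≤ I → I * grassEnv F A 𝒜 (Fin m) ≤ I →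
      (∃ r : ℕ, I ^ r = ⊥) → I ≤ N) := by
  set ι₁ : A →ₗ[F] A ⊗[F] Grass F (Fin m) :=
    (Algebra.TensorProduct.includeLeft (S := F)).toLinearMap with hι₁def
  set N : Submodule F (A ⊗[F] Grass F (Fin m)) :=
    Submodule.map ι₁ J ⊔ grassEnvStar F A 𝒜 (Fin m) with hN
  -- notation
  set star := grassStar F (Fin m) with hstar
  set π := envPi F A (Fin m) with hπdef
  have hι₁app : ∀ a : A, ι₁ a = a ⊗ₜ[F] (1 : Grass F (Fin m)) := by
    intro a
    rw [hι₁def]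
    simp only [AlgHom.toLinearMap_apply, Algebra.TensorProduct.includeLeft_apply]
  -- gradings multiply
  have hgr : ∀ i j : ZMod 2, 𝒜 i * 𝒜 j ≤ 𝒜 (i + j) := fun i j =>
    Submodule.mul_le.2 fun _ ha _ hb => SetLike.mul_mem_graded ha hb
  have hgr0 : ∀ i : ZMod 2, 𝒜 0 * 𝒜 i ≤ 𝒜 i := fun i => by
    have := hgr 0 i; rwa [zero_add] at this
  have hgr0' : ∀ i : ZMod 2, 𝒜 i * 𝒜 0 ≤ 𝒜 i := fun i => by
    have := hgr i 0; rwa [add_zero] at this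
  -- `map ι₁ p` inside `tensSub`s
  have hmaple : ∀ p : Submodule F A,
      Submodule.map ι₁ p ≤ tensSub F p (1 : Submodule F (Grass F (Fin m))) := by
    rintro p _ ⟨a, ha, rfl⟩
    rw [hι₁app]
    exact tmul_mem_tensSub ha (Submodule.one_le.mp le_rfl)
  have hmaple0 : ∀ p : Submodule F A, p ≤ 𝒜 0 →
      Submodule.map ι₁ p ≤ tensSub F (𝒜 0) (grassPart F (Fin m) 0) := by
    rintro p hp _ ⟨a, ha, rfl⟩
    rw [hι₁app]
    exact tmul_mem_tensSub (hp ha) one_mem_grassPart_zero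
  have hmapmul : ∀ p q : Submodule F A,
      Submodule.map ι₁ p * Submodule.map ι₁ q = Submodule.map ι₁ (p * q) := by
    intro p q
    rw [hι₁def]
    exact (Submodule.map_mul p q (Algebra.TensorProduct.includeLeft (S := F))).symm
  -- the star-Grassmann envelope sits inside the envelope
  have hEstarle : grassEnvStar F A 𝒜 (Fin m) ≤ grassEnv F A 𝒜 (Fin m) :=
    sup_le (le_trans (tensSub_mono le_rfl inf_le_right) le_sup_left)
      (le_trans (tensSub_mono le_rfl inf_le_right) le_sup_right)
  -- the envelope decomposes
  have henv_eq : grassEnv F A 𝒜 (Fin m)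
      = Submodule.map ι₁ (𝒜 0) ⊔ grassEnvStar F A 𝒜 (Fin m) := by
    apply le_antisymm
    · intro x hx
      obtain ⟨h1, h2⟩ := grassEnv_decomp (𝒜 := 𝒜) hx
      exact Submodule.mem_sup.2
        ⟨ι₁ (π x), ⟨π x, h1, rfl⟩, x - ι₁ (π x), h2, add_sub_cancel _ _⟩
    · exact sup_le (le_trans (hmaple0 (𝒜 0) le_rfl) le_sup_left) hEstarle
  have hmapJle : Submodule.map ι₁ J ≤ grassEnv F A 𝒜 (Fin m) :=
    le_trans (hmaple0 J hJA) le_sup_left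
  have hNle : N ≤ grassEnv F A 𝒜 (Fin m) := by
    rw [hN]; exact sup_le hmapJle hEstarle
  -- products of the homogeneous star components
  have hq : ∀ i j : ZMod 2,
      (star ⊓ grassPart F (Fin m) i) * (star ⊓ grassPart F (Fin m) j)
        ≤ star ⊓ grassPart F (Fin m) (i + j) := by
    intro i j
    refine Submodule.mul_le.2 fun x hx y hy => Submodule.mem_inf.2 ⟨?_, ?_⟩
    · exact mem_grassStar_mul (Submodule.mem_inf.1 hx).1
    · exact grassPart_mul_le i j
        (Submodule.mul_mem_mul (Submodule.mem_inf.1 hx).2 (Submodule.mem_inf.1 hy).2)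
  have hTle : ∀ k : ZMod 2,
      tensSub F (𝒜 k) (star ⊓ grassPart F (Fin m) k) ≤ grassEnvStar F A 𝒜 (Fin m) := by
    intro k
    have hk : ∀ z : ZMod 2, z = 0 ∨ z = 1 := by decide
    rcases hk k with rfl | rfl
    · exact le_sup_left
    · exact le_sup_right
  have hTT : ∀ i j : ZMod 2,
      tensSub F (𝒜 i) (star ⊓ grassPart F (Fin m) i) *
        tensSub F (𝒜 j) (star ⊓ grassPart F (Fin m) j) ≤ grassEnvStar F A 𝒜 (Fin m) :=
    fun i j => le_trans (le_trans tensSub_mul_le (tensSub_mono (hgr i j) (hq i j))) (hTle (i + j))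
  have hEE : grassEnvStar F A 𝒜 (Fin m) * grassEnvStar F A 𝒜 (Fin m)
      ≤ grassEnvStar F A 𝒜 (Fin m) := by
    rw [grassEnvStar, Submodule.sup_mul, Submodule.mul_sup, Submodule.mul_sup]
    exact sup_le (sup_le (hTT 0 0) (hTT 0 1)) (sup_le (hTT 1 0) (hTT 1 1))
  -- `map ι₁ p` (p ⊆ 𝒜 0) multiplied with homogeneous star components
  have hmapT : ∀ (p : Submodule F A), p ≤ 𝒜 0 → ∀ i : ZMod 2,
      Submodule.map ι₁ p * tensSub F (𝒜 i) (star ⊓ grassPart F (Fin m) i)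
        ≤ tensSub F (𝒜 i) (star ⊓ grassPart F (Fin m) i) := by
    intro p hp i
    refine le_trans (mul_le_mul' (hmaple p) le_rfl) (le_trans tensSub_mul_le ?_)
    refine tensSub_mono (le_trans (mul_le_mul' hp le_rfl) (hgr0 i)) ?_
    rw [Submodule.one_mul]
  have hTmap : ∀ (p : Submodule F A), p ≤ 𝒜 0 → ∀ i : ZMod 2,
      tensSub F (𝒜 i) (star ⊓ grassPart F (Fin m) i) * Submodule.map ι₁ p
        ≤ tensSub F (𝒜 i) (star ⊓ grassPart F (Fin m) i) := by
    intro p hp i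
    refine le_trans (mul_le_mul' le_rfl (hmaple p)) (le_trans tensSub_mul_le ?_)
    refine tensSub_mono (le_trans (mul_le_mul' le_rfl hp) (hgr0' i)) ?_
    rw [Submodule.mul_one]
  have hmapE : ∀ (p : Submodule F A), p ≤ 𝒜 0 →
      Submodule.map ι₁ p * grassEnvStar F A 𝒜 (Fin m) ≤ grassEnvStar F A 𝒜 (Fin m) := by
    intro p hp
    rw [grassEnvStar, Submodule.mul_sup]
    exact sup_le (le_trans (hmapT p hp 0) le_sup_left) (le_trans (hmapT p hp 1) le_sup_right)
  have hEmap : ∀ (p : Submodule F A), p ≤ 𝒜 0 →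
      grassEnvStar F A 𝒜 (Fin m) * Submodule.map ι₁ p ≤ grassEnvStar F A 𝒜 (Fin m) := by
    intro p hp
    rw [grassEnvStar, Submodule.sup_mul]
    exact sup_le (le_trans (hTmap p hp 0) le_sup_left) (le_trans (hTmap p hp 1) le_sup_right)
  -- N is a two-sided ideal of the envelope
  have hGNl : grassEnv F A 𝒜 (Fin m) * N ≤ N := by
    rw [hN, henv_eq, Submodule.sup_mul, Submodule.mul_sup, Submodule.mul_sup]
    refine sup_le (sup_le ?_ ?_) (sup_le ?_ ?_)
    · rw [hmapmul]
      exact le_sup_of_le_left (Submodule.map_mono hJl)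
    · exact le_trans (hmapE (𝒜 0) le_rfl) le_sup_right
    · rw [grassEnvStar, Submodule.sup_mul]
      refine sup_le (le_trans (hTmap J hJA 0) ?_) (le_trans (hTmap J hJA 1) ?_)
      · exact le_sup_of_le_right le_sup_left
      · exact le_sup_of_le_right le_sup_right
    · exact le_trans hEE le_sup_right
  have hGNr : N * grassEnv F A 𝒜 (Fin m) ≤ N := by
    rw [hN, henv_eq, Submodule.sup_mul, Submodule.mul_sup, Submodule.mul_sup]
    refine sup_le (sup_le ?_ ?_) (sup_le ?_ ?_)
    · rw [hmapmul]
      exact le_sup_of_le_left (Submodule.map_mono hJr)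
    · rw [grassEnvStar, Submodule.mul_sup]
      refine sup_le (le_trans (hmapT J hJA 0) ?_) (le_trans (hmapT J hJA 1) ?_)
      · exact le_sup_of_le_right le_sup_left
      · exact le_sup_of_le_right le_sup_right
    · exact le_trans (hEmap (𝒜 0) le_rfl) le_sup_right
    · exact le_trans hEE le_sup_right
  -- nilpotency of N via the ideal L = A ⊗ star
  have hstar_ml : ∀ (X : Submodule F (Grass F (Fin m))), X * star ≤ star :=
    fun X => Submodule.mul_le.2 fun _ _ _ hy => mul_mem_grassStar hy
  have hstar_mr : ∀ (X : Submodule F (Grass F (Fin m))), star * X ≤ star :=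
    fun X => Submodule.mul_le.2 fun _ hx _ _ => mem_grassStar_mul hx
  have hLl : ∀ X : Submodule F (A ⊗[F] Grass F (Fin m)),
      X * tensSub F (⊤ : Submodule F A) star ≤ tensSub F (⊤ : Submodule F A) star := by
    intro X
    calc X * tensSub F (⊤ : Submodule F A) star
        ≤ tensSub F ⊤ ⊤ * tensSub F (⊤ : Submodule F A) star := by
          rw [tensSub_top]; exact mul_le_mul' le_top le_rfl
      _ ≤ tensSub F (⊤ * ⊤) (⊤ * star) := tensSub_mul_le
      _ ≤ tensSub F (⊤ : Submodule F A) star := tensSub_mono le_top (hstar_ml ⊤)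
  have hLr : ∀ X : Submodule F (A ⊗[F] Grass F (Fin m)),
      tensSub F (⊤ : Submodule F A) star * X ≤ tensSub F (⊤ : Submodule F A) star := by
    intro X
    calc tensSub F (⊤ : Submodule F A) star * X
        ≤ tensSub F (⊤ : Submodule F A) star * tensSub F ⊤ ⊤ := by
          rw [tensSub_top]; exact mul_le_mul' le_rfl le_top
      _ ≤ tensSub F (⊤ * ⊤) (star * ⊤) := tensSub_mul_le
      _ ≤ tensSub F (⊤ : Submodule F A) star := tensSub_mono le_top (hstar_mr ⊤)
  have hNL : N ≤ Submodule.map ι₁ J ⊔ tensSub F (⊤ : Submodule F A) star := by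
    rw [hN]
    refine sup_le le_sup_left (le_trans ?_ le_sup_right)
    exact sup_le (tensSub_mono le_top inf_le_left) (tensSub_mono le_top inf_le_left)
  have hpowN : ∀ k : ℕ,
      N ^ (k+1) ≤ Submodule.map ι₁ (J ^ (k+1)) ⊔ tensSub F (⊤ : Submodule F A) star := by
    intro k
    induction k with
    | zero =>
        have e1 : N ^ (0+1) = N := by rw [zero_add]; exact pow_one N
        have e2 : J ^ (0+1) = J := by rw [zero_add]; exact pow_one J
        rw [e1, e2]; exact hNL
    | succ l ih =>
        have e : N ^ (l+1+1) = N ^ (l+1) * N := pow_succ N (l+1)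
        rw [e]
        calc N ^ (l+1) * N
            ≤ (Submodule.map ι₁ (J ^ (l+1)) ⊔ tensSub F (⊤ : Submodule F A) star) *
              (Submodule.map ι₁ J ⊔ tensSub F (⊤ : Submodule F A) star) :=
              mul_le_mul' ih hNL
          _ ≤ Submodule.map ι₁ (J ^ (l+1+1)) ⊔ tensSub F (⊤ : Submodule F A) star := by
              rw [Submodule.sup_mul, Submodule.mul_sup, Submodule.mul_sup]
              refine sup_le (sup_le ?_ ?_) (sup_le ?_ ?_)
              · rw [hmapmul, ← pow_succ]; exact le_sup_left
              · exact le_trans (hLl _) le_sup_right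
              · exact le_trans (hLr _) le_sup_right
              · exact le_trans (hLr _) le_sup_right
  obtain ⟨r, hr⟩ := hJnil
  have hJr1 : J ^ (r+1) = ⊥ := by rw [pow_succ, hr, Submodule.bot_mul]
  have hNr : N ^ (r+1) ≤ tensSub F (⊤ : Submodule F A) star := by
    have := hpowN r
    rwa [hJr1, Submodule.map_bot, bot_sup_eq] at this
  have hLpow : ∀ k : ℕ,
      tensSub F (⊤ : Submodule F A) star ^ (k+1) ≤ tensSub F (⊤ : Submodule F A) (star ^ (k+1)) := by
    intro k
    induction k with
    | zero =>
        have e1 : tensSub F (⊤ : Submodule F A) star ^ (0+1) = tensSub F (⊤ : Submodule F A) star := by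
          rw [zero_add]; exact pow_one _
        have e2 : star ^ (0+1) = star := by rw [zero_add]; exact pow_one star
        rw [e1, e2]
    | succ l ih =>
        have e1 : tensSub F (⊤ : Submodule F A) star ^ (l+1+1)
            = tensSub F (⊤ : Submodule F A) star ^ (l+1) * tensSub F (⊤ : Submodule F A) star :=
          pow_succ (tensSub F (⊤ : Submodule F A) star) (l+1)
        have e2 : star ^ (l+1+1) = star ^ (l+1) * star := pow_succ star (l+1)
        rw [e1, e2]
        exact le_trans (mul_le_mul' ih le_rfl)
          (le_trans tensSub_mul_le (tensSub_mono le_top le_rfl))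
  have hLbot : tensSub F (⊤ : Submodule F A) star ^ (m+1) = ⊥ := by
    rw [eq_bot_iff]
    refine le_trans (hLpow m) ?_
    have hsp : star ^ (m+1) = ⊥ := by rw [hstar]; exact grassStar_pow m
    rw [hsp, tensSub_bot]
  have hNnil : N ^ ((r+1) * (m+1)) = ⊥ := by
    have e : N ^ ((r+1) * (m+1)) = (N ^ (r+1)) ^ (m+1) := pow_mul N (r+1) (m+1)
    rw [e, eq_bot_iff]
    exact le_trans (pow_mono hNr (m+1)) hLbot.le
  -- the projection π kills nothing essential: π ∘ ι₁ = id on submodules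
  have hπι : ∀ p : Submodule F A,
      Submodule.map π.toLinearMap (Submodule.map ι₁ p) = p := by
    intro p
    rw [← Submodule.map_comp]
    have hcomp : π.toLinearMap ∘ₗ ι₁ = LinearMap.id := by
      rw [hι₁def]
      refine LinearMap.ext fun a => ?_
      simp only [LinearMap.comp_apply, AlgHom.toLinearMap_apply,
        Algebra.TensorProduct.includeLeft_apply, LinearMap.id_apply]
      exact envPi_includeLeft a
    rw [hcomp, Submodule.map_id]
  refine ⟨?_, hNle, hGNl, hGNr, ⟨(r+1) * (m+1), hNnil⟩, ?_⟩
  · -- decomposition G_m(A) = S ⊔ N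
    rw [hN, henv_eq, ← hSJ, Submodule.map_sup, sup_assoc]
  · -- maximality
    rintro I hIe hIl hIr ⟨r', hr'⟩
    have hmap𝒜env : Submodule.map ι₁ (𝒜 0) ≤ grassEnv F A 𝒜 (Fin m) := by
      rw [henv_eq]; exact le_sup_left
    have hπI : Submodule.map π.toLinearMap I ≤ J := by
      refine hJmax _ ?_ ?_ ?_ ⟨r' + 1, ?_⟩
      · rintro _ ⟨x, hx, rfl⟩
        exact (grassEnv_decomp (𝒜 := 𝒜) (hIe hx)).1
      · calc 𝒜 0 * Submodule.map π.toLinearMap I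
            = Submodule.map π.toLinearMap (Submodule.map ι₁ (𝒜 0)) *
              Submodule.map π.toLinearMap I := by rw [hπι]
          _ = Submodule.map π.toLinearMap (Submodule.map ι₁ (𝒜 0) * I) :=
              (Submodule.map_mul _ _ π).symm
          _ ≤ Submodule.map π.toLinearMap I :=
              Submodule.map_mono (le_trans (mul_le_mul' hmap𝒜env le_rfl) hIl)
      · calc Submodule.map π.toLinearMap I * 𝒜 0
            = Submodule.map π.toLinearMap I *
              Submodule.map π.toLinearMap (Submodule.map ι₁ (𝒜 0)) := by rw [hπι]
          _ = Submodule.map π.toLinearMap (I * Submodule.map ι₁ (𝒜 0)) :=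
              (Submodule.map_mul _ _ π).symm
          _ ≤ Submodule.map π.toLinearMap I :=
              Submodule.map_mono (le_trans (mul_le_mul' le_rfl hmap𝒜env) hIr)
      · have hI1 : I ^ (r'+1) = ⊥ := by
          have e : I ^ (r'+1) = I ^ r' * I := pow_succ I r'
          rw [e, hr', Submodule.bot_mul]
        have e2 : Submodule.map π.toLinearMap I ^ (r'+1)
            = Submodule.map π.toLinearMap (I ^ (r'+1)) := (Submodule.map_pow I π (r'+1)).symm
        rw [e2, hI1, Submodule.map_bot]
    intro x hx
    obtain ⟨h1, h2⟩ := grassEnv_decomp (𝒜 := 𝒜) (hIe hx)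
    rw [hN]
    exact Submodule.mem_sup.2
      ⟨ι₁ (π x), ⟨π x, hπI ⟨x, hx, rfl⟩, rfl⟩, x - ι₁ (π x), h2, add_sub_cancel _ _⟩
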